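/- Let (H, ▷) be a cocommutative post-Hopf algebra. Define x*y := x₍₁₎·(x₍₂₎▷y) and T(x) := ψ_{x₍₁₎}(S(x₍₂₎)), where ψ is the convolution inverse of the map θ_x(y)=x▷y. Then (H, *, 1, Δ, ε, T) is a Hopf algebra (the subadjacent Hopf algebra). -/

import Mathlib

set_option linter.unusedSectionVars false
set_option maxHeartbeats 1000000

open scoped TensorProduct
open Coalgebra LinearMap

section Frozen

variable (R H : Type*) [CommRing R] [AddCommGroup H] [Module R H] [Coalgebra R H]

/-- A Hopf algebra structure (multiplication, unit, antipode) on the coalgebra `H`: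
the multiplication is associative with unit, comultiplication and counit are algebra
maps, and `S` is an antipode (expressed via arbitrary Sweedler representations). -/
structure HopfMul where
  mul : H →ₗ[R] H →ₗ[R] H
  one : H
  S : H →ₗ[R] H
  mul_assoc : ∀ a b c : H, mul (mul a b) c = mul a (mul b c)
  one_mul : ∀ a : H, mul one a = a
  mul_one : ∀ a : H, mul a one = a
  comul_mul : ∀ (a b : H) {ι₁ : Type*} {ι₂ : Type*} (ra : Coalgebra.Repr R a ι₁) (rb : Coalgebra.Repr R b ι₂),
    comul (R := R) (mul a b) = ∑ i ∈ ra.index, ∑ j ∈ rb.index,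
      mul (ra.left i) (rb.left j) ⊗ₜ[R] mul (ra.right i) (rb.right j)
  comul_one : comul (R := R) one = one ⊗ₜ[R] one
  counit_mul : ∀ a b : H, counit (R := R) (mul a b) = counit (R := R) a * counit (R := R) b
  counit_one : counit (R := R) one = 1
  S_mul_left : ∀ (a : H) {ι : Type*} (r : Coalgebra.Repr R a ι),
    ∑ i ∈ r.index, mul (S (r.left i)) (r.right i) = counit (R := R) a • one
  S_mul_right : ∀ (a : H) {ι : Type*} (r : Coalgebra.Repr R a ι),
    ∑ i ∈ r.index, mul (r.left i) (S (r.right i)) = counit (R := R) a • one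

/-- Cocommutativity of the coalgebra `H`. -/
def Cocomm : Prop :=
  ∀ a : H, TensorProduct.comm R H H (comul (R := R) a) = comul (R := R) a

/-- A post-Hopf algebra structure `▷ = tr` on the Hopf algebra `(H, h)`:
`tr` is a coalgebra map satisfying `x▷(y·z) = (x₍₁₎▷y)·(x₍₂₎▷z)` and
`x▷(y▷z) = (x₍₁₎·(x₍₂₎▷y))▷z`, and `θ_x(y) = x▷y` is convolution invertible with
convolution inverse `ψ = inv`. -/
structure PostHopf (h : HopfMul R H) where
  tr : H →ₗ[R] H →ₗ[R] H
  inv : H →ₗ[R] H →ₗ[R] H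
  comul_tr : ∀ (x y : H) {ι₁ : Type*} {ι₂ : Type*} (rx : Coalgebra.Repr R x ι₁) (ry : Coalgebra.Repr R y ι₂),
    comul (R := R) (tr x y) = ∑ i ∈ rx.index, ∑ j ∈ ry.index,
      tr (rx.left i) (ry.left j) ⊗ₜ[R] tr (rx.right i) (ry.right j)
  counit_tr : ∀ x y : H,
    counit (R := R) (tr x y) = counit (R := R) x * counit (R := R) y
  tr_mul : ∀ (x y z : H) {ι : Type*} (r : Coalgebra.Repr R x ι),
    tr x (h.mul y z) = ∑ i ∈ r.index, h.mul (tr (r.left i) y) (tr (r.right i) z)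
  tr_tr : ∀ (x y z : H) {ι : Type*} (r : Coalgebra.Repr R x ι),
    tr x (tr y z) = ∑ i ∈ r.index, tr (h.mul (r.left i) (tr (r.right i) y)) z
  inv_tr : ∀ (x y : H) {ι : Type*} (r : Coalgebra.Repr R x ι),
    ∑ i ∈ r.index, inv (r.left i) (tr (r.right i) y) = counit (R := R) x • y
  tr_inv : ∀ (x y : H) {ι : Type*} (r : Coalgebra.Repr R x ι),
    ∑ i ∈ r.index, tr (r.left i) (inv (r.right i) y) = counit (R := R) x • y

end Frozen

namespace PHaux

variable {R : Type*} [CommRing R] {H : Type*} [AddCommGroup H] [Module R H] [Coalgebra R H]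
variable {A B C D P' Q' A' B' A'' B'' P'' : Type*}
  [AddCommGroup A] [Module R A] [AddCommGroup B] [Module R B]
  [AddCommGroup C] [Module R C] [AddCommGroup D] [Module R D]
  [AddCommGroup P'] [Module R P'] [AddCommGroup Q'] [Module R Q']
  [AddCommGroup A'] [Module R A'] [AddCommGroup B'] [Module R B']
  [AddCommGroup A''] [Module R A''] [AddCommGroup B''] [Module R B'']
  [AddCommGroup P''] [Module R P'']

/-- convolution unit with value `b`. -/
noncomputable def e (b : A) : H →ₗ[R] A := (counit (R := R) (A := H)).smulRight b

@[simp] lemma e_apply (b : A) (x : H) : e (R := R) b x = counit (R := R) x • b := rfl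

/-- generalized convolution product. -/
noncomputable def conv (μ : A →ₗ[R] B →ₗ[R] C) (f : H →ₗ[R] A) (g : H →ₗ[R] B) :
    H →ₗ[R] C :=
  TensorProduct.lift (μ.compl₁₂ f g) ∘ₗ comul

lemma conv_repr (μ : A →ₗ[R] B →ₗ[R] C) (f : H →ₗ[R] A) (g : H →ₗ[R] B) {a : H}
    {ι : Type*} (r : Coalgebra.Repr R a ι) :
    conv μ f g a = ∑ i ∈ r.index, μ (f (r.left i)) (g (r.right i)) := by
  simp only [conv, comp_apply, ← r.eq, map_sum, TensorProduct.lift.tmul, compl₁₂_apply]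

lemma sum_counit_smul_left (f : H →ₗ[R] A) {a : H} {ι : Type*} (r : Coalgebra.Repr R a ι) :
    ∑ i ∈ r.index, counit (R := R) (r.left i) • f (r.right i) = f a := by
  have h := Coalgebra.sum_counit_tmul_eq (R := R) r
  have h2 := congrArg (TensorProduct.lift ((LinearMap.lsmul R A).compl₂ f)) h
  simp only [map_sum, TensorProduct.lift.tmul, compl₂_apply, lsmul_apply] at h2
  simpa using h2

lemma sum_counit_smul_right (f : H →ₗ[R] A) {a : H} {ι : Type*} (r : Coalgebra.Repr R a ι) :
    ∑ i ∈ r.index, counit (R := R) (r.right i) • f (r.left i) = f a := by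
  have h := Coalgebra.sum_tmul_counit_eq (R := R) r
  have h2 := congrArg (TensorProduct.lift (((LinearMap.lsmul R A).compl₂ f).flip)) h
  simp only [map_sum, TensorProduct.lift.tmul, flip_apply, compl₂_apply, lsmul_apply] at h2
  simpa using h2

lemma sum_counit_mul {a : H} {ι : Type*} (r : Coalgebra.Repr R a ι) :
    ∑ i ∈ r.index, counit (R := R) (r.left i) * counit (R := R) (r.right i)
      = counit (R := R) a := by
  simpa [smul_eq_mul] using sum_counit_smul_left (counit (R := R) (A := H)) r

lemma conv_e_right (μ : A →ₗ[R] B →ₗ[R] C) (f : H →ₗ[R] A) (b : B) :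
    conv μ f (e b) = μ.flip b ∘ₗ f := by
  ext a
  rw [conv_repr μ f (e b) (Coalgebra.Repr.arbitrary R a)]
  simp only [e_apply, map_smul, comp_apply, flip_apply]
  calc ∑ i ∈ _, counit (R := R) ((ℛ R a).right i) • μ (f ((ℛ R a).left i)) b
      = μ (f a) b := sum_counit_smul_right ((μ.flip b) ∘ₗ f) (ℛ R a)

lemma conv_e_left (μ : A →ₗ[R] B →ₗ[R] C) (g : H →ₗ[R] B) (a₀ : A) :
    conv μ (e a₀) g = μ a₀ ∘ₗ g := by
  ext a
  rw [conv_repr μ (e a₀) g (Coalgebra.Repr.arbitrary R a)]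
  simp only [e_apply, map_smul, LinearMap.smul_apply, comp_apply]
  exact sum_counit_smul_left ((μ a₀) ∘ₗ g) (ℛ R a)

lemma comp_e (F : A →ₗ[R] B) (b : A) : F ∘ₗ (e (H := H) (R := R) b) = e (F b) := by
  ext x; simp

lemma conv_e_e (μ : A →ₗ[R] B →ₗ[R] C) (a₀ : A) (b₀ : B) :
    conv (H := H) μ (e a₀) (e b₀) = e (μ a₀ b₀) := by
  rw [conv_e_left, comp_e]

lemma conv_map (μ : A →ₗ[R] B →ₗ[R] C) (f : H →ₗ[R] A) (g : H →ₗ[R] B) (F : C →ₗ[R] D) :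
    F ∘ₗ conv μ f g = conv (μ.compr₂ F) f g := by
  ext a
  rw [comp_apply, conv_repr μ f g (ℛ R a), conv_repr (μ.compr₂ F) f g (ℛ R a), map_sum]
  simp [compr₂_apply]

lemma conv_compl (μ : A →ₗ[R] B →ₗ[R] C) (F : A' →ₗ[R] A) (f : H →ₗ[R] A') (g : H →ₗ[R] B) :
    conv μ (F ∘ₗ f) g = conv (μ ∘ₗ F) f g := by
  ext a
  rw [conv_repr μ _ g (ℛ R a), conv_repr (μ ∘ₗ F) f g (ℛ R a)]
  simp

lemma conv_compr (μ : A →ₗ[R] B →ₗ[R] C) (G : B' →ₗ[R] B) (f : H →ₗ[R] A) (g : H →ₗ[R] B') :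
    conv μ f (G ∘ₗ g) = conv (μ.compl₂ G) f g := by
  ext a
  rw [conv_repr μ f _ (ℛ R a), conv_repr (μ.compl₂ G) f g (ℛ R a)]
  simp

/-- coassociativity workhorse, grouping `(12)3 = 1(23)`. -/
lemma core3 (μ₁ : A →ₗ[R] Q' →ₗ[R] D) (μ₂ : B →ₗ[R] C →ₗ[R] Q')
    (f : H →ₗ[R] A) (g : H →ₗ[R] B) (k : H →ₗ[R] C) {a : H} {ι : Type*} (r : Coalgebra.Repr R a ι)
    {κ Λ : Type*} (rL : ∀ i, Coalgebra.Repr R (r.left i) κ) (rR : ∀ i, Coalgebra.Repr R (r.right i) Λ) :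
    ∑ i ∈ r.index, ∑ j ∈ (rL i).index,
        μ₁ (f ((rL i).left j)) (μ₂ (g ((rL i).right j)) (k (r.right i)))
      = ∑ i ∈ r.index, ∑ j ∈ (rR i).index,
        μ₁ (f (r.left i)) (μ₂ (g ((rR i).left j)) (k ((rR i).right j))) := by
  have h := Coalgebra.sum_tmul_tmul_eq r rL rR
  have h2 := congrArg
    (TensorProduct.lift (μ₁.compl₁₂ f (TensorProduct.lift (μ₂.compl₁₂ g k)))) h
  simpa only [map_sum, TensorProduct.lift.tmul, compl₁₂_apply] using h2

/-- coassociativity workhorse, grouping variant `(12)3 = 1(23)` with pairing on the left. -/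
lemma core3' (μ₀ : P' →ₗ[R] C →ₗ[R] D) (ν : A →ₗ[R] B →ₗ[R] P')
    (f : H →ₗ[R] A) (g : H →ₗ[R] B) (k : H →ₗ[R] C) {a : H} {ι : Type*} (r : Coalgebra.Repr R a ι)
    {κ Λ : Type*} (rL : ∀ i, Coalgebra.Repr R (r.left i) κ) (rR : ∀ i, Coalgebra.Repr R (r.right i) Λ) :
    ∑ i ∈ r.index, ∑ j ∈ (rL i).index,
        μ₀ (ν (f ((rL i).left j)) (g ((rL i).right j))) (k (r.right i))
      = ∑ i ∈ r.index, ∑ j ∈ (rR i).index,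
        μ₀ (ν (f (r.left i)) (g ((rR i).left j))) (k ((rR i).right j)) := by
  have h := Coalgebra.sum_tmul_tmul_eq r rL rR
  have h2 := congrArg (TensorProduct.lift
    ((TensorProduct.lift.equiv (RingHom.id R) H H D).toLinearMap ∘ₗ
      (llcomp R H P' (H →ₗ[R] D) (μ₀.compl₂ k)) ∘ₗ (ν.compl₁₂ f g))) h
  simpa only [map_sum, TensorProduct.lift.tmul, comp_apply, coe_comp,
    LinearEquiv.coe_coe, TensorProduct.lift.equiv_apply, llcomp_apply,
    compl₁₂_apply, compl₂_apply, Function.comp_apply] using h2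

lemma conv_assoc (μab : A →ₗ[R] B →ₗ[R] P') (μpc : P' →ₗ[R] C →ₗ[R] D)
    (μbc : B →ₗ[R] C →ₗ[R] Q') (μaq : A →ₗ[R] Q' →ₗ[R] D)
    (compat : ∀ x y z, μpc (μab x y) z = μaq x (μbc y z))
    (f : H →ₗ[R] A) (g : H →ₗ[R] B) (k : H →ₗ[R] C) :
    conv μpc (conv μab f g) k = conv μaq f (conv μbc g k) := by
  ext a
  rw [conv_repr μpc _ k (ℛ R a), conv_repr μaq f _ (ℛ R a)]
  have hL : ∀ i ∈ (ℛ R a).index,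
      μpc (conv μab f g ((ℛ R a).left i)) (k ((ℛ R a).right i)) =
      ∑ j ∈ (ℛ R ((ℛ R a).left i)).index,
        μaq (f ((ℛ R ((ℛ R a).left i)).left j))
          (μbc (g ((ℛ R ((ℛ R a).left i)).right j)) (k ((ℛ R a).right i))) := by
    intro i _
    rw [conv_repr μab f g (ℛ R ((ℛ R a).left i)), map_sum, LinearMap.sum_apply]
    exact Finset.sum_congr rfl fun j _ => compat _ _ _
  have hR : ∀ i ∈ (ℛ R a).index,
      μaq (f ((ℛ R a).left i)) (conv μbc g k ((ℛ R a).right i)) =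
      ∑ j ∈ (ℛ R ((ℛ R a).right i)).index,
        μaq (f ((ℛ R a).left i))
          (μbc (g ((ℛ R ((ℛ R a).right i)).left j)) (k ((ℛ R ((ℛ R a).right i)).right j))) := by
    intro i _
    rw [conv_repr μbc g k (ℛ R ((ℛ R a).right i)), map_sum]
  rw [Finset.sum_congr rfl hL, Finset.sum_congr rfl hR]
  exact core3 μaq μbc f g k (ℛ R a) _ _

lemma conv_cancel_right (μ : A →ₗ[R] B →ₗ[R] A) (ν : B →ₗ[R] B →ₗ[R] B) (u₀ : B)
    (hu : ∀ x : A, μ x u₀ = x)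
    (hassoc : ∀ x y z, μ (μ x y) z = μ x (ν y z))
    {X X' : H →ₗ[R] A} {G Gi : H →ₗ[R] B}
    (hGGi : conv ν G Gi = e u₀) (hXX' : conv μ X G = conv μ X' G) : X = X' := by
  have unit : ∀ Y : H →ₗ[R] A, conv μ Y (e u₀) = Y := by
    intro Y
    rw [conv_e_right]
    ext x; simp [hu]
  calc X = conv μ X (conv ν G Gi) := by rw [hGGi, unit]
    _ = conv μ (conv μ X G) Gi := (conv_assoc μ μ ν μ hassoc X G Gi).symm
    _ = conv μ (conv μ X' G) Gi := by rw [hXX']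
    _ = conv μ X' (conv ν G Gi) := conv_assoc μ μ ν μ hassoc X' G Gi
    _ = X' := by rw [hGGi, unit]

lemma conv_cancel_left (μ : B →ₗ[R] A →ₗ[R] A) (ν : B →ₗ[R] B →ₗ[R] B) (u₀ : B)
    (hu : ∀ x : A, μ u₀ x = x)
    (hassoc : ∀ x y z, μ (ν x y) z = μ x (μ y z))
    {X X' : H →ₗ[R] A} {G Gi : H →ₗ[R] B}
    (hGiG : conv ν Gi G = e u₀) (hXX' : conv μ G X = conv μ G X') : X = X' := by
  have unit : ∀ Y : H →ₗ[R] A, conv μ (e u₀) Y = Y := by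
    intro Y
    rw [conv_e_left]
    ext x; simp [hu]
  calc X = conv μ (conv ν Gi G) X := by rw [hGiG, unit]
    _ = conv μ Gi (conv μ G X) := conv_assoc ν μ μ μ hassoc Gi G X
    _ = conv μ Gi (conv μ G X') := by rw [hXX']
    _ = conv μ (conv ν Gi G) X' := (conv_assoc ν μ μ μ hassoc Gi G X').symm
    _ = X' := by rw [hGiG, unit]

section Elem

local notation "δ" => (comul : H →ₗ[R] H ⊗[R] H)

/-- the mid-swap `(a⊗b)⊗(c⊗d) ↦ (a⊗c)⊗(b⊗d)`. -/
noncomputable def midSwap : (H ⊗[R] H) ⊗[R] (H ⊗[R] H) →ₗ[R] (H ⊗[R] H) ⊗[R] (H ⊗[R] H) :=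
  (TensorProduct.assoc R H H (H ⊗[R] H)).symm.toLinearMap ∘ₗ
    LinearMap.lTensor H (TensorProduct.leftComm R H H H).toLinearMap ∘ₗ
    (TensorProduct.assoc R H H (H ⊗[R] H)).toLinearMap

@[simp] lemma midSwap_tmul (a b c d : H) :
    midSwap (R := R) ((a ⊗ₜ[R] b) ⊗ₜ[R] (c ⊗ₜ[R] d)) = (a ⊗ₜ[R] c) ⊗ₜ[R] (b ⊗ₜ[R] d) := by
  simp [midSwap, TensorProduct.assoc_tmul, TensorProduct.leftComm_tmul,
    TensorProduct.assoc_symm_tmul]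

lemma comm_comul_eq
    (hc : ∀ a : H, TensorProduct.comm R H H (comul (R := R) a) = comul (R := R) a) :
    (TensorProduct.comm R H H).toLinearMap ∘ₗ δ = δ :=
  LinearMap.ext hc

lemma midSwap_comul
    (hc : ∀ a : H, TensorProduct.comm R H H (comul (R := R) a) = comul (R := R) a) :
    midSwap (R := R) ∘ₗ (TensorProduct.map δ δ ∘ₗ δ)
    = TensorProduct.map δ δ ∘ₗ δ := by
  set L' : H →ₗ[R] H ⊗[R] (H ⊗[R] H) := LinearMap.lTensor H δ ∘ₗ δ with hL'
  set R' : H →ₗ[R] (H ⊗[R] H) ⊗[R] H := LinearMap.rTensor H δ ∘ₗ δ with hR'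
  have coassocL : (TensorProduct.assoc R H H H).toLinearMap ∘ₗ R' = L' :=
    Coalgebra.coassoc (R := R)
  have claim1 : (TensorProduct.leftComm R H H H).toLinearMap ∘ₗ
      (TensorProduct.assoc R H H H).toLinearMap
      = (TensorProduct.assoc R H H H).toLinearMap ∘ₗ
        LinearMap.rTensor H (TensorProduct.comm R H H).toLinearMap := by
    apply TensorProduct.ext_threefold
    intro x y z
    simp [TensorProduct.assoc_tmul, TensorProduct.leftComm_tmul]
  have rcR : LinearMap.rTensor H (TensorProduct.comm R H H).toLinearMap ∘ₗ R' = R' := by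
    rw [hR', ← LinearMap.comp_assoc, ← LinearMap.rTensor_comp, comm_comul_eq hc]
  have lcLC : (TensorProduct.leftComm R H H H).toLinearMap ∘ₗ L' = L' := by
    rw [← coassocL, ← LinearMap.comp_assoc, claim1, LinearMap.comp_assoc, rcR]
  have m0 : TensorProduct.map δ δ
      = LinearMap.lTensor (H ⊗[R] H) δ ∘ₗ LinearMap.rTensor H δ := by
    apply TensorProduct.ext'
    intro x y
    simp
  have n1 : (TensorProduct.assoc R H H (H ⊗[R] H)).toLinearMap ∘ₗ
      LinearMap.lTensor (H ⊗[R] H) δ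
      = LinearMap.lTensor H (LinearMap.lTensor H δ) ∘ₗ
        (TensorProduct.assoc R H H H).toLinearMap := by
    apply TensorProduct.ext_threefold
    intro x y z
    simp [TensorProduct.assoc_tmul]
  have goal1 : (TensorProduct.assoc R H H (H ⊗[R] H)).toLinearMap ∘ₗ
      (TensorProduct.map δ δ ∘ₗ δ) = LinearMap.lTensor H L' ∘ₗ δ := by
    rw [m0]
    calc (TensorProduct.assoc R H H (H ⊗[R] H)).toLinearMap ∘ₗ
        ((LinearMap.lTensor (H ⊗[R] H) δ ∘ₗ LinearMap.rTensor H δ) ∘ₗ δ)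
        = ((TensorProduct.assoc R H H (H ⊗[R] H)).toLinearMap ∘ₗ
            LinearMap.lTensor (H ⊗[R] H) δ) ∘ₗ (LinearMap.rTensor H δ ∘ₗ δ) := by
          simp only [LinearMap.comp_assoc]
      _ = (LinearMap.lTensor H (LinearMap.lTensor H δ) ∘ₗ
            (TensorProduct.assoc R H H H).toLinearMap) ∘ₗ R' := by rw [n1]
      _ = LinearMap.lTensor H (LinearMap.lTensor H δ) ∘ₗ L' := by
          rw [LinearMap.comp_assoc, coassocL]
      _ = LinearMap.lTensor H L' ∘ₗ δ := by
          rw [hL', ← LinearMap.comp_assoc, ← LinearMap.lTensor_comp]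
  have goal2 : LinearMap.lTensor H (TensorProduct.leftComm R H H H).toLinearMap ∘ₗ
      (LinearMap.lTensor H L' ∘ₗ δ) = LinearMap.lTensor H L' ∘ₗ δ := by
    rw [← LinearMap.comp_assoc, ← LinearMap.lTensor_comp, lcLC]
  have hsymm : (TensorProduct.assoc R H H (H ⊗[R] H)).symm.toLinearMap ∘ₗ
      (TensorProduct.assoc R H H (H ⊗[R] H)).toLinearMap
      = LinearMap.id := by
    ext x; simp
  calc midSwap (R := R) ∘ₗ (TensorProduct.map δ δ ∘ₗ δ)
      = (TensorProduct.assoc R H H (H ⊗[R] H)).symm.toLinearMap ∘ₗ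
        (LinearMap.lTensor H (TensorProduct.leftComm R H H H).toLinearMap ∘ₗ
          ((TensorProduct.assoc R H H (H ⊗[R] H)).toLinearMap ∘ₗ
            (TensorProduct.map δ δ ∘ₗ δ))) := by
        simp only [midSwap, LinearMap.comp_assoc]
    _ = (TensorProduct.assoc R H H (H ⊗[R] H)).symm.toLinearMap ∘ₗ
        (LinearMap.lTensor H L' ∘ₗ δ) := by rw [goal1, goal2]
    _ = (TensorProduct.assoc R H H (H ⊗[R] H)).symm.toLinearMap ∘ₗ
        ((TensorProduct.assoc R H H (H ⊗[R] H)).toLinearMap ∘ₗ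
          (TensorProduct.map δ δ ∘ₗ δ)) := by rw [goal1]
    _ = TensorProduct.map δ δ ∘ₗ δ := by
        rw [← LinearMap.comp_assoc, hsymm, LinearMap.id_comp]

lemma elem4_sum
    (hc : ∀ a : H, TensorProduct.comm R H H (comul (R := R) a) = comul (R := R) a)
    {a : H} {ι : Type*} (r : Coalgebra.Repr R a ι)
    {κ Λ : Type*} (rL : ∀ i, Coalgebra.Repr R (r.left i) κ) (rR : ∀ i, Coalgebra.Repr R (r.right i) Λ) :
    ∑ i ∈ r.index, ∑ j ∈ (rL i).index, ∑ k ∈ (rR i).index,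
        ((rL i).left j ⊗ₜ[R] (rR i).left k) ⊗ₜ[R] ((rL i).right j ⊗ₜ[R] (rR i).right k)
      = ∑ i ∈ r.index, ∑ j ∈ (rL i).index, ∑ k ∈ (rR i).index,
        ((rL i).left j ⊗ₜ[R] (rL i).right j) ⊗ₜ[R] ((rR i).left k ⊗ₜ[R] (rR i).right k) := by
  have base : ∑ i ∈ r.index, ∑ j ∈ (rL i).index, ∑ k ∈ (rR i).index,
      ((rL i).left j ⊗ₜ[R] (rL i).right j) ⊗ₜ[R] ((rR i).left k ⊗ₜ[R] (rR i).right k)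
      = TensorProduct.map δ δ (δ a) := by
    rw [← r.eq, map_sum]
    refine Finset.sum_congr rfl fun i _ => ?_
    rw [TensorProduct.map_tmul, ← (rL i).eq, ← (rR i).eq, TensorProduct.sum_tmul]
    exact Finset.sum_congr rfl fun j _ => by rw [TensorProduct.tmul_sum]
  have swapped := congrArg (midSwap (R := R)) base
  simp only [map_sum, midSwap_tmul] at swapped
  rw [swapped, base]
  exact LinearMap.congr_fun (midSwap_comul hc) a

end Elem

lemma core4 (hc : ∀ a : H, TensorProduct.comm R H H (comul (R := R) a) = comul (R := R) a)
    (πO : A'' →ₗ[R] B'' →ₗ[R] P'') (μA : A →ₗ[R] A' →ₗ[R] A'') (μB : B →ₗ[R] B' →ₗ[R] B'')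
    (f : H →ₗ[R] A) (f' : H →ₗ[R] A') (g : H →ₗ[R] B) (g' : H →ₗ[R] B')
    {a : H} {ι : Type*} (r : Coalgebra.Repr R a ι)
    {κ Λ : Type*} (rL : ∀ i, Coalgebra.Repr R (r.left i) κ) (rR : ∀ i, Coalgebra.Repr R (r.right i) Λ) :
    ∑ i ∈ r.index, ∑ j ∈ (rL i).index, ∑ k ∈ (rR i).index,
        πO (μA (f ((rL i).left j)) (f' ((rR i).left k)))
          (μB (g ((rL i).right j)) (g' ((rR i).right k)))
      = ∑ i ∈ r.index, ∑ j ∈ (rL i).index, ∑ k ∈ (rR i).index,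
        πO (μA (f ((rL i).left j)) (f' ((rL i).right j)))
          (μB (g ((rR i).left k)) (g' ((rR i).right k))) := by
  have h := elem4_sum hc r rL rR
  have h2 := congrArg (TensorProduct.lift (πO.compl₁₂
    (TensorProduct.lift (μA.compl₁₂ f f')) (TensorProduct.lift (μB.compl₁₂ g g')))) h
  simpa only [map_sum, TensorProduct.lift.tmul, compl₁₂_apply] using h2

lemma conv_interchange
    (hc : ∀ a : H, TensorProduct.comm R H H (comul (R := R) a) = comul (R := R) a)
    (μP : P' →ₗ[R] Q' →ₗ[R] P'') (πL : A →ₗ[R] B →ₗ[R] P') (πR : A' →ₗ[R] B' →ₗ[R] Q')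
    (πO : A'' →ₗ[R] B'' →ₗ[R] P'') (μA : A →ₗ[R] A' →ₗ[R] A'') (μB : B →ₗ[R] B' →ₗ[R] B'')
    (compat : ∀ x y x' y', μP (πL x y) (πR x' y') = πO (μA x x') (μB y y'))
    (f : H →ₗ[R] A) (g : H →ₗ[R] B) (f' : H →ₗ[R] A') (g' : H →ₗ[R] B') :
    conv μP (conv πL f g) (conv πR f' g') = conv πO (conv μA f f') (conv μB g g') := by
  ext a
  rw [conv_repr μP _ _ (ℛ R a), conv_repr πO _ _ (ℛ R a)]
  have hL : ∀ i ∈ (ℛ R a).index,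
      μP (conv πL f g ((ℛ R a).left i)) (conv πR f' g' ((ℛ R a).right i))
      = ∑ j ∈ (ℛ R ((ℛ R a).left i)).index, ∑ k ∈ (ℛ R ((ℛ R a).right i)).index,
          πO (μA (f ((ℛ R ((ℛ R a).left i)).left j)) (f' ((ℛ R ((ℛ R a).right i)).left k)))
            (μB (g ((ℛ R ((ℛ R a).left i)).right j)) (g' ((ℛ R ((ℛ R a).right i)).right k))) := by
    intro i _
    rw [conv_repr πL f g (ℛ R ((ℛ R a).left i)), conv_repr πR f' g' (ℛ R ((ℛ R a).right i))]
    simp only [map_sum, LinearMap.sum_apply]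
    rw [Finset.sum_comm]
    exact Finset.sum_congr rfl fun j _ => Finset.sum_congr rfl fun k _ => compat _ _ _ _
  have hR : ∀ i ∈ (ℛ R a).index,
      πO (conv μA f f' ((ℛ R a).left i)) (conv μB g g' ((ℛ R a).right i))
      = ∑ j ∈ (ℛ R ((ℛ R a).left i)).index, ∑ k ∈ (ℛ R ((ℛ R a).right i)).index,
          πO (μA (f ((ℛ R ((ℛ R a).left i)).left j)) (f' ((ℛ R ((ℛ R a).left i)).right j)))
            (μB (g ((ℛ R ((ℛ R a).right i)).left k)) (g' ((ℛ R ((ℛ R a).right i)).right k))) := by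
    intro i _
    rw [conv_repr μA f f' (ℛ R ((ℛ R a).left i)), conv_repr μB g g' (ℛ R ((ℛ R a).right i))]
    simp only [map_sum, LinearMap.sum_apply]
    rw [Finset.sum_comm]
  rw [Finset.sum_congr rfl hL, Finset.sum_congr rfl hR]
  exact core4 hc πO μA μB f f' g g' (ℛ R a) _ _

lemma conv_precomp (μ : A →ₗ[R] B →ₗ[R] C) (f : H →ₗ[R] A) (g : H →ₗ[R] B)
    (T : H →ₗ[R] H)
    (hT : ∀ x : H, comul (R := R) (T x) = TensorProduct.map T T (comul (R := R) x)) :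
    (conv μ f g) ∘ₗ T = conv μ (f ∘ₗ T) (g ∘ₗ T) := by
  ext a
  rw [comp_apply, conv_repr μ (f ∘ₗ T) (g ∘ₗ T) (ℛ R a)]
  rw [show conv μ f g (T a) = TensorProduct.lift (μ.compl₁₂ f g) (comul (T a)) from rfl,
    hT a, ← (ℛ R a).eq, map_sum, map_sum]
  simp [TensorProduct.lift.tmul]


section Small
universe w
variable {R' : Type*} {A : Type*} [CommSemiring R'] [AddCommMonoid A] [Module R' A]
  [CoalgebraStruct R' A]

private def natEmb : ℕ ↪ ULift.{w} ℕ :=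
  ⟨ULift.up, fun _ _ hab => congrArg ULift.down hab⟩

noncomputable def smallLeft {a : A} {ι : Type*} (r : Coalgebra.Repr R' a ι) (k : ULift.{w} ℕ) : A :=
  if hk : k.down < r.index.card then r.left (r.index.equivFin.symm ⟨k.down, hk⟩) else 0

noncomputable def smallRight {a : A} {ι : Type*} (r : Coalgebra.Repr R' a ι) (k : ULift.{w} ℕ) : A :=
  if hk : k.down < r.index.card then r.right (r.index.equivFin.symm ⟨k.down, hk⟩) else 0

lemma small_sum {M : Type*} [AddCommMonoid M] {a : A} {ι : Type*} (r : Coalgebra.Repr R' a ι)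
    (Φ : A → A → M) :
    ∑ i ∈ (Finset.range r.index.card).map natEmb.{w},
        Φ (smallLeft.{w} r i) (smallRight.{w} r i)
      = ∑ i ∈ r.index, Φ (r.left i) (r.right i) := by
  rw [Finset.sum_map]
  have h1 : ∀ k ∈ Finset.range r.index.card,
      Φ (smallLeft.{w} r (natEmb k)) (smallRight.{w} r (natEmb k))
        = (fun k : ℕ => if hk : k < r.index.card then
            Φ (r.left (r.index.equivFin.symm ⟨k, hk⟩)) (r.right (r.index.equivFin.symm ⟨k, hk⟩))
          else Φ 0 0) k := by
    intro k hk
    rw [Finset.mem_range] at hk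
    simp [smallLeft, smallRight, hk, show (natEmb.{w} k).down = k from rfl]
  rw [Finset.sum_congr rfl h1]
  rw [← Fin.sum_univ_eq_sum_range]
  have h2 : ∀ i : Fin r.index.card,
      (fun k : ℕ => if hk : k < r.index.card then
          Φ (r.left (r.index.equivFin.symm ⟨k, hk⟩)) (r.right (r.index.equivFin.symm ⟨k, hk⟩))
        else Φ 0 0) i.val
      = Φ (r.left (r.index.equivFin.symm i)) (r.right (r.index.equivFin.symm i)) := by
    intro i
    simp [i.isLt]
  rw [Finset.sum_congr rfl fun i _ => h2 i]
  rw [Equiv.sum_comp r.index.equivFin.symm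
    (fun y => Φ (r.left y) (r.right y))]
  rw [Finset.sum_coe_sort r.index (fun y => Φ (r.left y) (r.right y))]

/-- reindex a representation so that the index type lives in an arbitrary universe. -/
noncomputable def smallRepr {a : A} {ι : Type*} (r : Coalgebra.Repr R' a ι) : Coalgebra.Repr R' a (ULift.{w} ℕ) where
  index := (Finset.range r.index.card).map natEmb.{w}
  left := smallLeft.{w} r
  right := smallRight.{w} r
  eq := (small_sum r (fun x y => x ⊗ₜ[R'] y)).trans r.eq

lemma smallRepr_sum {M : Type*} [AddCommMonoid M] {a : A} {ι : Type*} (r : Coalgebra.Repr R' a ι)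
    (Φ : A → A → M) :
    ∑ i ∈ (smallRepr.{w} r).index, Φ ((smallRepr.{w} r).left i) ((smallRepr.{w} r).right i)
      = ∑ i ∈ r.index, Φ (r.left i) (r.right i) :=
  small_sum r Φ

end Small

end PHaux

open Coalgebra

namespace PHmain
open PHaux LinearMap

variable {R H : Type*} [CommRing R] [AddCommGroup H] [Module R H] [Coalgebra R H]
variable (h : HopfMul R H) (P : PostHopf R H h)

/-! universe-safe restatements of the structure fields, valid for representations
with index types in any universe. -/

lemma S_mul_right' (a : H) {ι : Type*} (r : Coalgebra.Repr R a ι) :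
    ∑ i ∈ r.index, h.mul (r.left i) (h.S (r.right i)) = counit (R := R) a • h.one := by
  have := h.S_mul_right a (smallRepr r)
  rwa [smallRepr_sum r (fun x y => h.mul x (h.S y))] at this

lemma S_mul_left' (a : H) {ι : Type*} (r : Coalgebra.Repr R a ι) :
    ∑ i ∈ r.index, h.mul (h.S (r.left i)) (r.right i) = counit (R := R) a • h.one := by
  have := h.S_mul_left a (smallRepr r)
  rwa [smallRepr_sum r (fun x y => h.mul (h.S x) y)] at this

lemma comul_mul' (a b : H) {ιa : Type*} (ra : Coalgebra.Repr R a ιa) {ιb : Type*} (rb : Coalgebra.Repr R b ιb) :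
    comul (R := R) (h.mul a b) = ∑ i ∈ ra.index, ∑ j ∈ rb.index,
      h.mul (ra.left i) (rb.left j) ⊗ₜ[R] h.mul (ra.right i) (rb.right j) := by
  have := h.comul_mul a b (smallRepr ra) (smallRepr rb)
  rw [smallRepr_sum ra (fun x y => ∑ j ∈ (smallRepr rb).index,
    h.mul x ((smallRepr rb).left j) ⊗ₜ[R] h.mul y ((smallRepr rb).right j))] at this
  rw [this]
  exact Finset.sum_congr rfl fun i _ =>
    smallRepr_sum rb (fun x y => h.mul (ra.left i) x ⊗ₜ[R] h.mul (ra.right i) y)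

lemma comul_tr' (x y : H) {ιx : Type*} (rx : Coalgebra.Repr R x ιx) {ιy : Type*} (ry : Coalgebra.Repr R y ιy) :
    comul (R := R) (P.tr x y) = ∑ i ∈ rx.index, ∑ j ∈ ry.index,
      P.tr (rx.left i) (ry.left j) ⊗ₜ[R] P.tr (rx.right i) (ry.right j) := by
  have := P.comul_tr x y (smallRepr rx) (smallRepr ry)
  rw [smallRepr_sum rx (fun u v => ∑ j ∈ (smallRepr ry).index,
    P.tr u ((smallRepr ry).left j) ⊗ₜ[R] P.tr v ((smallRepr ry).right j))] at this
  rw [this]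
  exact Finset.sum_congr rfl fun i _ =>
    smallRepr_sum ry (fun u v => P.tr (rx.left i) u ⊗ₜ[R] P.tr (rx.right i) v)

lemma tr_mul' (x y z : H) {ι : Type*} (r : Coalgebra.Repr R x ι) :
    P.tr x (h.mul y z)
      = ∑ i ∈ r.index, h.mul (P.tr (r.left i) y) (P.tr (r.right i) z) := by
  have := P.tr_mul x y z (smallRepr r)
  rwa [smallRepr_sum r (fun u v => h.mul (P.tr u y) (P.tr v z))] at this

lemma tr_tr' (x y z : H) {ι : Type*} (r : Coalgebra.Repr R x ι) :
    P.tr x (P.tr y z) = ∑ i ∈ r.index, P.tr (h.mul (r.left i) (P.tr (r.right i) y)) z := by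
  have := P.tr_tr x y z (smallRepr r)
  rwa [smallRepr_sum r (fun u v => P.tr (h.mul u (P.tr v y)) z)] at this

lemma inv_tr' (x y : H) {ι : Type*} (r : Coalgebra.Repr R x ι) :
    ∑ i ∈ r.index, P.inv (r.left i) (P.tr (r.right i) y) = counit (R := R) x • y := by
  have := P.inv_tr x y (smallRepr r)
  rwa [smallRepr_sum r (fun u v => P.inv u (P.tr v y))] at this

lemma tr_inv' (x y : H) {ι : Type*} (r : Coalgebra.Repr R x ι) :
    ∑ i ∈ r.index, P.tr (r.left i) (P.inv (r.right i) y) = counit (R := R) x • y := by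
  have := P.tr_inv x y (smallRepr r)
  rwa [smallRepr_sum r (fun u v => P.tr u (P.inv v y))] at this


/-- canonical one-element representation of `comul one = one ⊗ one`. -/
noncomputable def rone : Coalgebra.Repr R h.one Unit where
  index := Finset.univ
  left _ := h.one
  right _ := h.one
  eq := by simpa using h.comul_one.symm

/-- the subadjacent multiplication `x*y = x₁ · (x₂ ▷ y)`. -/
noncomputable def Qmul : H →ₗ[R] H →ₗ[R] H :=
  conv (llcomp R H H H) h.mul P.tr

/-- the subadjacent antipode `T x = ψ_{x₁}(S x₂)`. -/
noncomputable def Tant : H →ₗ[R] H :=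
  conv (LinearMap.id : (H →ₗ[R] H) →ₗ[R] (H →ₗ[R] H)) P.inv h.S

lemma Qmul_repr (x y : H) {ι : Type*} (r : Coalgebra.Repr R x ι) :
    Qmul h P x y = ∑ i ∈ r.index, h.mul (r.left i) (P.tr (r.right i) y) := by
  rw [Qmul, conv_repr _ _ _ r, LinearMap.sum_apply]
  simp [llcomp_apply]

lemma Tant_repr (x : H) {ι : Type*} (r : Coalgebra.Repr R x ι) :
    Tant h P x = ∑ i ∈ r.index, P.inv (r.left i) (h.S (r.right i)) := by
  rw [Tant, conv_repr _ _ _ r]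
  simp

lemma conv_inv_tr : conv (llcomp R H H H) P.inv P.tr = e LinearMap.id := by
  ext x y
  rw [conv_repr _ _ _ (ℛ R x)]
  simpa [llcomp_apply] using inv_tr' h P x y (ℛ R x)

lemma conv_tr_inv : conv (llcomp R H H H) P.tr P.inv = e LinearMap.id := by
  ext x y
  rw [conv_repr _ _ _ (ℛ R x)]
  simpa [llcomp_apply] using tr_inv' h P x y (ℛ R x)

lemma conv_S_right : conv h.mul LinearMap.id h.S = e h.one := by
  ext a
  rw [conv_repr _ _ _ (ℛ R a)]
  simpa using S_mul_right' h a (ℛ R a)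

lemma conv_S_left : conv h.mul h.S LinearMap.id = e h.one := by
  ext a
  rw [conv_repr _ _ _ (ℛ R a)]
  simpa using S_mul_left' h a (ℛ R a)

/-- `x ▷ 1 = ε(x) • 1`. -/
lemma tr_one_eq : P.tr.flip h.one = e h.one := by
  set α : H →ₗ[R] H := P.tr.flip h.one with hα
  have comul_alpha : ∀ (x : H) (r : Coalgebra.Repr R x (H × H)),
      comul (R := R) (α x) = ∑ i ∈ r.index, α (r.left i) ⊗ₜ[R] α (r.right i) := by
    intro x r
    have := comul_tr' h P x h.one r (rone h)
    simpa [rone, hα] using this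
  have a1 : conv h.mul α (h.S ∘ₗ α) = e h.one := by
    ext x
    rw [conv_repr _ _ _ (ℛ R x)]
    have := S_mul_right' h (α x)
      ⟨(ℛ R x).index, fun i => α ((ℛ R x).left i), fun i => α ((ℛ R x).right i),
        (comul_alpha x (ℛ R x)).symm⟩
    have hε : counit (R := R) (α x) = counit (R := R) x := by
      rw [hα]
      simp only [flip_apply]
      rw [P.counit_tr, h.counit_one, mul_one]
    rw [hε] at this
    simpa using this
  have a2 : conv h.mul α α = α := by
    ext x
    rw [conv_repr _ _ _ (ℛ R x)]
    have h11 : h.mul h.one h.one = h.one := h.one_mul h.one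
    have := tr_mul' h P x h.one h.one (ℛ R x)
    rw [h11] at this
    simp only [hα, flip_apply]
    exact this.symm
  have a3 : α = e h.one := by
    calc α = conv h.mul α (e h.one) := by
          rw [conv_e_right]
          ext x
          simp [h.mul_one]
      _ = conv h.mul α (conv h.mul α (h.S ∘ₗ α)) := by rw [a1]
      _ = conv h.mul (conv h.mul α α) (h.S ∘ₗ α) :=
          (conv_assoc h.mul h.mul h.mul h.mul h.mul_assoc α α (h.S ∘ₗ α)).symm
      _ = conv h.mul α (h.S ∘ₗ α) := by rw [a2]
      _ = e h.one := a1
  exact a3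

lemma tr_one_apply (x : H) : P.tr x h.one = counit (R := R) x • h.one := by
  have := LinearMap.congr_fun (tr_one_eq h P) x
  simpa using this

/-- `1 ▷ z = z`. -/
lemma tr_id_one : P.tr h.one = LinearMap.id := by
  have step1 : ∀ x z : H, P.tr x (P.tr h.one z) = P.tr x z := by
    intro x z
    have := tr_tr' h P x h.one z (ℛ R x)
    rw [this]
    have congr1 : ∀ i ∈ (ℛ R x).index,
        P.tr (h.mul ((ℛ R x).left i) (P.tr ((ℛ R x).right i) h.one)) z
          = counit (R := R) ((ℛ R x).right i) • P.tr ((ℛ R x).left i) z := by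
      intro i _
      rw [tr_one_apply, map_smul, h.mul_one, map_smul, LinearMap.smul_apply]
    rw [Finset.sum_congr rfl congr1]
    exact sum_counit_smul_right (P.tr.flip z) (ℛ R x) |>.trans (by simp)
  have step2 : ∀ y : H, P.inv h.one (P.tr h.one y) = y := by
    intro y
    have := inv_tr' h P h.one y (rone h)
    simpa [rone, h.counit_one] using this
  ext z
  have e1 := step2 (P.tr h.one z)
  rw [step1 h.one z] at e1
  rw [step2 z] at e1
  simpa using e1.symm

lemma Q_one_mul (a : H) : Qmul h P h.one a = a := by
  rw [Qmul_repr h P h.one a (rone h)]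
  simp only [rone, Finset.univ_unique, Finset.sum_singleton]
  rw [tr_id_one h P]
  simpa using h.one_mul a

lemma Q_mul_one (x : H) : Qmul h P x h.one = x := by
  rw [Qmul_repr h P x h.one (ℛ R x)]
  have congr1 : ∀ i ∈ (ℛ R x).index,
      h.mul ((ℛ R x).left i) (P.tr ((ℛ R x).right i) h.one)
        = counit (R := R) ((ℛ R x).right i) • (ℛ R x).left i := by
    intro i _
    rw [tr_one_apply h P, map_smul, h.mul_one]
  rw [Finset.sum_congr rfl congr1]
  simpa using sum_counit_smul_right (LinearMap.id : H →ₗ[R] H) (ℛ R x)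

lemma Q_counit_mul (a b : H) :
    counit (R := R) (Qmul h P a b) = counit (R := R) a * counit (R := R) b := by
  rw [Qmul_repr h P a b (ℛ R a), map_sum]
  have congr1 : ∀ i ∈ (ℛ R a).index,
      counit (R := R) (h.mul ((ℛ R a).left i) (P.tr ((ℛ R a).right i) b))
        = counit (R := R) ((ℛ R a).left i) * counit (R := R) ((ℛ R a).right i)
            * counit (R := R) b := by
    intro i _
    rw [h.counit_mul, P.counit_tr, mul_assoc]
  rw [Finset.sum_congr rfl congr1, ← Finset.sum_mul, sum_counit_mul (ℛ R a)]

/-- pairing `(a⊗b, c⊗d) ↦ (ac)⊗(bd)` built from a bilinear multiplication. -/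
noncomputable def pairOf (μ : H →ₗ[R] H →ₗ[R] H) :
    (H ⊗[R] H) →ₗ[R] (H ⊗[R] H) →ₗ[R] (H ⊗[R] H) :=
  TensorProduct.lift ((TensorProduct.mapBilinear (RingHom.id R) H H H H).compl₁₂ μ μ)

@[simp] lemma pairOf_tmul (μ : H →ₗ[R] H →ₗ[R] H) (a b c d : H) :
    pairOf (μ := μ) ((a ⊗ₜ[R] b)) (c ⊗ₜ[R] d) = μ a c ⊗ₜ[R] μ b d := by
  simp [pairOf, TensorProduct.mapBilinear_apply]

lemma comul_mul_elem (a b : H) :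
    comul (R := R) (h.mul a b) = pairOf h.mul (comul a) (comul b) := by
  rw [comul_mul' h a b (ℛ R a) (ℛ R b)]
  conv_rhs => rw [← (ℛ R a).eq, ← (ℛ R b).eq]
  simp only [map_sum, LinearMap.sum_apply, pairOf_tmul]
  exact Finset.sum_comm

lemma comul_tr_elem (a b : H) :
    comul (R := R) (P.tr a b) = pairOf P.tr (comul a) (comul b) := by
  rw [comul_tr' h P a b (ℛ R a) (ℛ R b)]
  conv_rhs => rw [← (ℛ R a).eq, ← (ℛ R b).eq]
  simp only [map_sum, LinearMap.sum_apply, pairOf_tmul]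
  exact Finset.sum_comm

lemma comul_Qmul (hc : Cocomm R H) (a b : H) :
    comul (R := R) (Qmul h P a b) = pairOf (Qmul h P) (comul a) (comul b) := by
  have hLHS : comul (R := R) (Qmul h P a b)
      = ∑ n ∈ (ℛ R b).index, ∑ i ∈ (ℛ R a).index,
          ∑ j ∈ (ℛ R ((ℛ R a).left i)).index, ∑ k ∈ (ℛ R ((ℛ R a).right i)).index,
          (h.mul ((ℛ R ((ℛ R a).left i)).left j)
              (P.tr ((ℛ R ((ℛ R a).right i)).left k) ((ℛ R b).left n)))
            ⊗ₜ[R] (h.mul ((ℛ R ((ℛ R a).left i)).right j)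
              (P.tr ((ℛ R ((ℛ R a).right i)).right k) ((ℛ R b).right n))) := by
    rw [Qmul_repr h P a b (ℛ R a), map_sum]
    have congr1 : ∀ i ∈ (ℛ R a).index,
        comul (R := R) (h.mul ((ℛ R a).left i) (P.tr ((ℛ R a).right i) b))
          = ∑ n ∈ (ℛ R b).index, ∑ k ∈ (ℛ R ((ℛ R a).right i)).index,
              ∑ j ∈ (ℛ R ((ℛ R a).left i)).index,
              (h.mul ((ℛ R ((ℛ R a).left i)).left j)
                  (P.tr ((ℛ R ((ℛ R a).right i)).left k) ((ℛ R b).left n)))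
                ⊗ₜ[R] (h.mul ((ℛ R ((ℛ R a).left i)).right j)
                  (P.tr ((ℛ R ((ℛ R a).right i)).right k) ((ℛ R b).right n))) := by
      intro i _
      rw [comul_mul_elem h, comul_tr_elem h P]
      conv_lhs => rw [← (ℛ R ((ℛ R a).left i)).eq, ← (ℛ R ((ℛ R a).right i)).eq,
        ← (ℛ R b).eq]
      simp only [map_sum, LinearMap.sum_apply, pairOf_tmul]
    rw [Finset.sum_congr rfl congr1]
    rw [Finset.sum_comm]
    exact Finset.sum_congr rfl fun n _ => Finset.sum_congr rfl fun i _ => Finset.sum_comm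
  have hRHS : pairOf (Qmul h P) (comul a) (comul b)
      = ∑ n ∈ (ℛ R b).index, ∑ i ∈ (ℛ R a).index,
          ∑ j ∈ (ℛ R ((ℛ R a).left i)).index, ∑ k ∈ (ℛ R ((ℛ R a).right i)).index,
          (h.mul ((ℛ R ((ℛ R a).left i)).left j)
              (P.tr ((ℛ R ((ℛ R a).left i)).right j) ((ℛ R b).left n)))
            ⊗ₜ[R] (h.mul ((ℛ R ((ℛ R a).right i)).left k)
              (P.tr ((ℛ R ((ℛ R a).right i)).right k) ((ℛ R b).right n))) := by
    conv_lhs => rw [← (ℛ R a).eq, ← (ℛ R b).eq]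
    rw [map_sum]
    refine Finset.sum_congr rfl fun n _ => ?_
    rw [map_sum, LinearMap.sum_apply]
    refine Finset.sum_congr rfl fun i _ => ?_
    rw [pairOf_tmul (Qmul h P),
      Qmul_repr h P ((ℛ R a).left i) ((ℛ R b).left n) (ℛ R ((ℛ R a).left i)),
      Qmul_repr h P ((ℛ R a).right i) ((ℛ R b).right n) (ℛ R ((ℛ R a).right i)),
      TensorProduct.sum_tmul]
    exact Finset.sum_congr rfl fun j _ => by rw [TensorProduct.tmul_sum]
  rw [hLHS, hRHS]
  refine Finset.sum_congr rfl fun n _ => ?_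
  have := core4 hc (TensorProduct.mk R H H)
    (h.mul.compl₂ (P.tr.flip ((ℛ R b).left n)))
    (h.mul.compl₂ (P.tr.flip ((ℛ R b).right n)))
    LinearMap.id LinearMap.id LinearMap.id LinearMap.id
    (ℛ R a) (fun i => ℛ R ((ℛ R a).left i)) (fun i => ℛ R ((ℛ R a).right i))
  simpa only [compl₂_apply, flip_apply, id_coe, id_eq, TensorProduct.mk_apply] using this

lemma Q_comul_mul (hc : Cocomm R H) (a b : H)
    {ιa : Type*} (ra : Coalgebra.Repr R a ιa) {ιb : Type*} (rb : Coalgebra.Repr R b ιb) :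
    comul (R := R) (Qmul h P a b) = ∑ i ∈ ra.index, ∑ j ∈ rb.index,
      Qmul h P (ra.left i) (rb.left j) ⊗ₜ[R] Qmul h P (ra.right i) (rb.right j) := by
  rw [comul_Qmul h P hc a b]
  conv_lhs => rw [← ra.eq, ← rb.eq]
  simp only [map_sum, LinearMap.sum_apply, pairOf_tmul]
  exact Finset.sum_comm

lemma tr_Qmul (a b : H) : P.tr (Qmul h P a b) = P.tr a ∘ₗ P.tr b := by
  ext z
  rw [Qmul_repr h P a b (ℛ R a), map_sum, LinearMap.sum_apply, comp_apply]
  exact (tr_tr' h P a b z (ℛ R a)).symm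

lemma Q_assoc (hc : Cocomm R H) (x y z : H) :
    Qmul h P (Qmul h P x y) z = Qmul h P x (Qmul h P y z) := by
  have hLHS : Qmul h P (Qmul h P x y) z
      = ∑ n ∈ (ℛ R y).index, ∑ i ∈ (ℛ R x).index,
          ∑ j ∈ (ℛ R ((ℛ R x).left i)).index,
          h.mul (h.mul ((ℛ R ((ℛ R x).left i)).left j)
              (P.tr ((ℛ R ((ℛ R x).left i)).right j) ((ℛ R y).left n)))
            (P.tr ((ℛ R x).right i) (P.tr ((ℛ R y).right n) z)) := by
    rw [Qmul_repr h P _ z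
      ⟨(ℛ R x).index ×ˢ (ℛ R y).index,
        fun p => Qmul h P ((ℛ R x).left p.1) ((ℛ R y).left p.2),
        fun p => Qmul h P ((ℛ R x).right p.1) ((ℛ R y).right p.2),
        by rw [Finset.sum_product]; exact (Q_comul_mul h P hc x y (ℛ R x) (ℛ R y)).symm⟩]
    rw [Finset.sum_product]
    have congr1 : ∀ i ∈ (ℛ R x).index, ∀ n ∈ (ℛ R y).index,
        h.mul (Qmul h P ((ℛ R x).left i) ((ℛ R y).left n))
            (P.tr (Qmul h P ((ℛ R x).right i) ((ℛ R y).right n)) z)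
          = ∑ j ∈ (ℛ R ((ℛ R x).left i)).index,
            h.mul (h.mul ((ℛ R ((ℛ R x).left i)).left j)
                (P.tr ((ℛ R ((ℛ R x).left i)).right j) ((ℛ R y).left n)))
              (P.tr ((ℛ R x).right i) (P.tr ((ℛ R y).right n) z)) := by
      intro i _ n _
      rw [tr_Qmul h P, comp_apply,
        Qmul_repr h P ((ℛ R x).left i) ((ℛ R y).left n) (ℛ R ((ℛ R x).left i)),
        map_sum, LinearMap.sum_apply]
    rw [Finset.sum_congr rfl fun i hi => Finset.sum_congr rfl fun n hn => congr1 i hi n hn]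
    exact Finset.sum_comm
  have hRHS : Qmul h P x (Qmul h P y z)
      = ∑ n ∈ (ℛ R y).index, ∑ i ∈ (ℛ R x).index,
          ∑ j ∈ (ℛ R ((ℛ R x).right i)).index,
          h.mul (h.mul ((ℛ R x).left i)
              (P.tr ((ℛ R ((ℛ R x).right i)).left j) ((ℛ R y).left n)))
            (P.tr ((ℛ R ((ℛ R x).right i)).right j) (P.tr ((ℛ R y).right n) z)) := by
    rw [Qmul_repr h P x _ (ℛ R x)]
    have congr1 : ∀ i ∈ (ℛ R x).index,
        h.mul ((ℛ R x).left i) (P.tr ((ℛ R x).right i) (Qmul h P y z))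
          = ∑ n ∈ (ℛ R y).index, ∑ j ∈ (ℛ R ((ℛ R x).right i)).index,
            h.mul (h.mul ((ℛ R x).left i)
                (P.tr ((ℛ R ((ℛ R x).right i)).left j) ((ℛ R y).left n)))
              (P.tr ((ℛ R ((ℛ R x).right i)).right j) (P.tr ((ℛ R y).right n) z)) := by
      intro i _
      rw [Qmul_repr h P y z (ℛ R y), map_sum]
      have congr2 : ∀ n ∈ (ℛ R y).index,
          P.tr ((ℛ R x).right i) (h.mul ((ℛ R y).left n) (P.tr ((ℛ R y).right n) z))
            = ∑ j ∈ (ℛ R ((ℛ R x).right i)).index,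
              h.mul (P.tr ((ℛ R ((ℛ R x).right i)).left j) ((ℛ R y).left n))
                (P.tr ((ℛ R ((ℛ R x).right i)).right j) (P.tr ((ℛ R y).right n) z)) :=
        fun n _ => tr_mul' h P ((ℛ R x).right i) ((ℛ R y).left n)
          (P.tr ((ℛ R y).right n) z) (ℛ R ((ℛ R x).right i))
      rw [Finset.sum_congr rfl congr2, map_sum]
      exact Finset.sum_congr rfl fun n _ => by
        rw [map_sum]
        exact Finset.sum_congr rfl fun j _ => (h.mul_assoc _ _ _).symm
    rw [Finset.sum_congr rfl congr1]
    exact Finset.sum_comm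
  rw [hLHS, hRHS]
  refine Finset.sum_congr rfl fun n _ => ?_
  have := core3' h.mul (h.mul.compl₂ (P.tr.flip ((ℛ R y).left n)))
    LinearMap.id LinearMap.id (P.tr.flip (P.tr ((ℛ R y).right n) z))
    (ℛ R x) (fun i => ℛ R ((ℛ R x).left i)) (fun i => ℛ R ((ℛ R x).right i))
  simpa only [compl₂_apply, flip_apply, id_coe, id_eq] using this

lemma conv_Qmul_id_T :
    conv (Qmul h P) LinearMap.id (Tant h P) = e h.one := by
  have idE : (LinearMap.id : (H →ₗ[R] H) →ₗ[R] (H →ₗ[R] H)) = LinearMap.id := rfl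
  have pack1 : conv (Qmul h P) LinearMap.id (Tant h P)
      = conv (LinearMap.id : (H →ₗ[R] H) →ₗ[R] (H →ₗ[R] H)) (Qmul h P) (Tant h P) := by
    have := conv_compl (LinearMap.id : (H →ₗ[R] H) →ₗ[R] (H →ₗ[R] H)) (Qmul h P)
      (LinearMap.id : H →ₗ[R] H) (Tant h P)
    rw [comp_id, id_comp] at this
    exact this.symm
  have step3 : conv (LinearMap.id : (H →ₗ[R] H) →ₗ[R] (H →ₗ[R] H)) P.tr (Tant h P)
      = h.S := by
    rw [Tant]
    rw [← conv_assoc (llcomp R H H H)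
      (LinearMap.id : (H →ₗ[R] H) →ₗ[R] (H →ₗ[R] H))
      (LinearMap.id : (H →ₗ[R] H) →ₗ[R] (H →ₗ[R] H))
      (LinearMap.id : (H →ₗ[R] H) →ₗ[R] (H →ₗ[R] H))
      (fun _ _ _ => rfl) P.tr P.inv h.S]
    rw [conv_tr_inv h P, conv_e_left]
    ext x; simp
  have step4 : conv (LinearMap.id : (H →ₗ[R] H) →ₗ[R] (H →ₗ[R] H)) h.mul h.S
      = e h.one := by
    have := conv_compl (LinearMap.id : (H →ₗ[R] H) →ₗ[R] (H →ₗ[R] H)) h.mul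
      (LinearMap.id : H →ₗ[R] H) h.S
    rw [comp_id, id_comp] at this
    rw [this]
    exact conv_S_right h
  rw [pack1, Qmul]
  rw [conv_assoc (llcomp R H H H)
    (LinearMap.id : (H →ₗ[R] H) →ₗ[R] (H →ₗ[R] H))
    (LinearMap.id : (H →ₗ[R] H) →ₗ[R] (H →ₗ[R] H))
    (LinearMap.id : (H →ₗ[R] H) →ₗ[R] (H →ₗ[R] H))
    (fun _ _ _ => rfl) h.mul P.tr (Tant h P)]
  rw [step3, step4]

lemma Q_S_mul_right (a : H) {ι : Type*} (r : Coalgebra.Repr R a ι) :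
    ∑ i ∈ r.index, Qmul h P (r.left i) (Tant h P (r.right i))
      = counit (R := R) a • h.one := by
  have h1 := conv_repr (Qmul h P) LinearMap.id (Tant h P) r
  rw [conv_Qmul_id_T h P] at h1
  simpa using h1.symm

lemma pairOf_mul_assoc : ∀ u v w : H ⊗[R] H,
    pairOf h.mul (pairOf h.mul u v) w = pairOf h.mul u (pairOf h.mul v w) := by
  intro u v w
  induction u using TensorProduct.induction_on with
  | zero => simp
  | add u₁ u₂ h₁ h₂ => simp [map_add, LinearMap.add_apply, h₁, h₂]
  | tmul a b =>
    induction v using TensorProduct.induction_on with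
    | zero => simp
    | add v₁ v₂ h₁ h₂ => simp [map_add, LinearMap.add_apply, h₁, h₂]
    | tmul c d =>
      induction w using TensorProduct.induction_on with
      | zero => simp
      | add w₁ w₂ h₁ h₂ => simp only [map_add, pairOf_tmul] at h₁ h₂ ⊢; rw [h₁, h₂]
      | tmul p q => simp [pairOf_tmul, h.mul_assoc]

lemma pairOf_one_left : ∀ u : H ⊗[R] H,
    pairOf h.mul (h.one ⊗ₜ[R] h.one) u = u := by
  intro u
  induction u using TensorProduct.induction_on with
  | zero => simp
  | add u₁ u₂ h₁ h₂ => simp [map_add, h₁, h₂]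
  | tmul a b => simp [pairOf_tmul, h.one_mul]

lemma map_comul_eq_conv (f g : H →ₗ[R] H) :
    TensorProduct.map f g ∘ₗ (comul : H →ₗ[R] H ⊗[R] H)
      = conv (TensorProduct.mk R H H) f g := by
  ext a
  rw [comp_apply, conv_repr _ _ _ (ℛ R a), ← (ℛ R a).eq, map_sum]
  simp

lemma comul_eq_conv : (comul : H →ₗ[R] H ⊗[R] H)
    = conv (TensorProduct.mk R H H) LinearMap.id LinearMap.id := by
  have := map_comul_eq_conv (LinearMap.id : H →ₗ[R] H) LinearMap.id
  rwa [TensorProduct.map_id, id_comp] at this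

lemma conv_pair_comul (f g : H →ₗ[R] H) :
    conv (pairOf h.mul) ((comul : H →ₗ[R] H ⊗[R] H) ∘ₗ f) (comul ∘ₗ g)
      = (comul : H →ₗ[R] H ⊗[R] H) ∘ₗ conv h.mul f g := by
  ext a
  rw [comp_apply, conv_repr _ _ _ (ℛ R a), conv_repr h.mul f g (ℛ R a), map_sum]
  exact Finset.sum_congr rfl fun i _ => by
    rw [comp_apply, comp_apply, comul_mul_elem h]

lemma comul_S (hc : Cocomm R H) :
    (comul : H →ₗ[R] H ⊗[R] H) ∘ₗ h.S = TensorProduct.map h.S h.S ∘ₗ comul := by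
  have ph2a : conv (pairOf h.mul) (comul : H →ₗ[R] H ⊗[R] H)
      (TensorProduct.map h.S h.S ∘ₗ comul) = e (h.one ⊗ₜ[R] h.one) := by
    rw [map_comul_eq_conv, comul_eq_conv]
    rw [conv_interchange hc (pairOf h.mul) (TensorProduct.mk R H H)
      (TensorProduct.mk R H H) (TensorProduct.mk R H H) h.mul h.mul
      (fun x y x' y' => by simp [pairOf_tmul]) LinearMap.id LinearMap.id h.S h.S]
    rw [conv_S_right h, conv_e_e]
    rfl
  have ph2b : conv (pairOf h.mul) ((comul : H →ₗ[R] H ⊗[R] H) ∘ₗ h.S) comul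
      = e (h.one ⊗ₜ[R] h.one) := by
    have : conv (pairOf h.mul) ((comul : H →ₗ[R] H ⊗[R] H) ∘ₗ h.S)
        (comul ∘ₗ LinearMap.id) = comul ∘ₗ conv h.mul h.S LinearMap.id :=
      conv_pair_comul h h.S LinearMap.id
    rw [comp_id] at this
    rw [this, conv_S_left h, comp_e, h.comul_one]
  have ph2c : conv (pairOf h.mul) (comul : H →ₗ[R] H ⊗[R] H) (comul ∘ₗ h.S)
      = e (h.one ⊗ₜ[R] h.one) := by
    have : conv (pairOf h.mul) ((comul : H →ₗ[R] H ⊗[R] H) ∘ₗ LinearMap.id)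
        (comul ∘ₗ h.S) = comul ∘ₗ conv h.mul LinearMap.id h.S :=
      conv_pair_comul h LinearMap.id h.S
    rw [comp_id] at this
    rw [this, conv_S_right h, comp_e, h.comul_one]
  exact (conv_cancel_left (pairOf h.mul) (pairOf h.mul) (h.one ⊗ₜ[R] h.one)
    (pairOf_one_left h) (pairOf_mul_assoc h) ph2b
    (ph2a.trans ph2c.symm)).symm

/-- `Θ_x = Σ θ_{x₁} ⊗ θ_{x₂}` acting on `H ⊗ H`. -/
noncomputable def Theta : H →ₗ[R] (H ⊗[R] H →ₗ[R] H ⊗[R] H) :=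
  conv (TensorProduct.mapBilinear (RingHom.id R) H H H H) P.tr P.tr

/-- `Ψ_x = Σ ψ_{x₁} ⊗ ψ_{x₂}` acting on `H ⊗ H`. -/
noncomputable def Psi : H →ₗ[R] (H ⊗[R] H →ₗ[R] H ⊗[R] H) :=
  conv (TensorProduct.mapBilinear (RingHom.id R) H H H H) P.inv P.inv

lemma ph3a (hc : Cocomm R H) :
    conv (llcomp R (H ⊗[R] H) (H ⊗[R] H) (H ⊗[R] H)) (Theta h P) (Psi h P)
      = e LinearMap.id := by
  rw [Theta, Psi]
  rw [conv_interchange hc (llcomp R (H ⊗[R] H) (H ⊗[R] H) (H ⊗[R] H))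
    (TensorProduct.mapBilinear (RingHom.id R) H H H H) (TensorProduct.mapBilinear (RingHom.id R) H H H H)
    (TensorProduct.mapBilinear (RingHom.id R) H H H H) (llcomp R H H H) (llcomp R H H H)
    (fun F G F' G' => by
      simp only [llcomp_apply, TensorProduct.mapBilinear_apply]
      exact (TensorProduct.map_comp F G F' G').symm)
    P.tr P.tr P.inv P.inv]
  rw [conv_tr_inv h P, conv_e_e]
  simp [TensorProduct.mapBilinear_apply]

lemma ph3b (hc : Cocomm R H) :
    conv (llcomp R (H ⊗[R] H) (H ⊗[R] H) (H ⊗[R] H)) (Psi h P) (Theta h P)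
      = e LinearMap.id := by
  rw [Theta, Psi]
  rw [conv_interchange hc (llcomp R (H ⊗[R] H) (H ⊗[R] H) (H ⊗[R] H))
    (TensorProduct.mapBilinear (RingHom.id R) H H H H) (TensorProduct.mapBilinear (RingHom.id R) H H H H)
    (TensorProduct.mapBilinear (RingHom.id R) H H H H) (llcomp R H H H) (llcomp R H H H)
    (fun F G F' G' => by
      simp only [llcomp_apply, TensorProduct.mapBilinear_apply]
      exact (TensorProduct.map_comp F G F' G').symm)
    P.inv P.inv P.tr P.tr]
  rw [conv_inv_tr h P, conv_e_e]
  simp [TensorProduct.mapBilinear_apply]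

lemma Dtheta (x : H) :
    (comul : H →ₗ[R] H ⊗[R] H) ∘ₗ P.tr x = Theta h P x ∘ₗ comul := by
  ext y
  rw [comp_apply, comp_apply]
  have rhs : (Theta h P x) (comul (R := R) y)
      = ∑ i ∈ (ℛ R x).index, ∑ j ∈ (ℛ R y).index,
        P.tr ((ℛ R x).left i) ((ℛ R y).left j)
          ⊗ₜ[R] P.tr ((ℛ R x).right i) ((ℛ R y).right j) := by
    rw [Theta, conv_repr _ _ _ (ℛ R x), LinearMap.sum_apply]
    refine Finset.sum_congr rfl fun i _ => ?_
    rw [TensorProduct.mapBilinear_apply, ← (ℛ R y).eq, map_sum]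
    exact Finset.sum_congr rfl fun j _ => by rw [TensorProduct.map_tmul]
  rw [rhs, comul_tr' h P x y (ℛ R x) (ℛ R y)]

lemma DthetaMap :
    llcomp R H H (H ⊗[R] H) (comul : H →ₗ[R] H ⊗[R] H) ∘ₗ P.tr
      = (llcomp R H (H ⊗[R] H) (H ⊗[R] H)).flip (comul : H →ₗ[R] H ⊗[R] H)
          ∘ₗ Theta h P := by
  refine LinearMap.ext fun x => ?_
  exact Dtheta h P x

lemma ph3c (hc : Cocomm R H) :
    llcomp R H H (H ⊗[R] H) (comul : H →ₗ[R] H ⊗[R] H) ∘ₗ P.inv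
      = (llcomp R H (H ⊗[R] H) (H ⊗[R] H)).flip (comul : H →ₗ[R] H ⊗[R] H)
          ∘ₗ Psi h P := by
  set lcd := llcomp (σ₁₂ := RingHom.id R) R H H (H ⊗[R] H) (comul : H →ₗ[R] H ⊗[R] H) with hlcd
  set rcd := (llcomp R H (H ⊗[R] H) (H ⊗[R] H)).flip (comul : H →ₗ[R] H ⊗[R] H)
    with hrcd
  set μ1 := llcomp (σ₁₂ := RingHom.id R) (σ₂₃ := RingHom.id R) (σ₁₃ := RingHom.id R) R H (H ⊗[R] H) (H ⊗[R] H) with hμ1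
  set μ2 := llcomp (σ₁₂ := RingHom.id R) (σ₂₃ := RingHom.id R) (σ₁₃ := RingHom.id R) R H H (H ⊗[R] H) with hμ2
  have pe1 : μ2 ∘ₗ lcd = (llcomp R H H H).compr₂ lcd := by
    ext F G y; rfl
  have pe2 : μ1.compl₂ lcd = μ2 ∘ₗ rcd := by
    ext G F y; rfl
  have E1 : conv μ2 (lcd ∘ₗ P.tr) P.inv = e (comul : H →ₗ[R] H ⊗[R] H) := by
    rw [conv_compl, pe1, ← conv_map, conv_tr_inv h P, comp_e]
    rfl
  have E2 : conv μ1 (Theta h P) (lcd ∘ₗ P.inv) = e (comul : H →ₗ[R] H ⊗[R] H) := by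
    rw [conv_compr, pe2, ← conv_compl, ← DthetaMap h P, E1]
  have unit1 : conv μ1 (e (LinearMap.id : H ⊗[R] H →ₗ[R] H ⊗[R] H)) (lcd ∘ₗ P.inv)
      = lcd ∘ₗ P.inv := by
    rw [conv_e_left]
    ext x y; rfl
  calc lcd ∘ₗ P.inv
      = conv μ1 (conv (llcomp R (H ⊗[R] H) (H ⊗[R] H) (H ⊗[R] H)) (Psi h P)
          (Theta h P)) (lcd ∘ₗ P.inv) := by rw [ph3b h P hc, unit1]
    _ = conv μ1 (Psi h P) (conv μ1 (Theta h P) (lcd ∘ₗ P.inv)) :=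
        conv_assoc _ μ1 μ1 μ1 (fun _ _ _ => rfl) _ _ _
    _ = conv μ1 (Psi h P) (e (comul : H →ₗ[R] H ⊗[R] H)) := by rw [E2]
    _ = rcd ∘ₗ Psi h P := by rw [conv_e_right]

lemma comul_Tant (hc : Cocomm R H) :
    (comul : H →ₗ[R] H ⊗[R] H) ∘ₗ Tant h P
      = conv (TensorProduct.mk R H H) (Tant h P) (Tant h P) := by
  rw [Tant, conv_map]
  have pe1 : (LinearMap.id : (H →ₗ[R] H) →ₗ[R] (H →ₗ[R] H)).compr₂
        (comul : H →ₗ[R] H ⊗[R] H)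
      = (LinearMap.id : (H →ₗ[R] H ⊗[R] H) →ₗ[R] (H →ₗ[R] H ⊗[R] H)) ∘ₗ
          llcomp R H H (H ⊗[R] H) (comul : H →ₗ[R] H ⊗[R] H) := by
    ext F y; rfl
  rw [pe1, ← conv_compl, ph3c h P hc, conv_compl]
  have pe2 : (LinearMap.id : (H →ₗ[R] H ⊗[R] H) →ₗ[R] (H →ₗ[R] H ⊗[R] H)) ∘ₗ
        (llcomp R H (H ⊗[R] H) (H ⊗[R] H)).flip (comul : H →ₗ[R] H ⊗[R] H)
      = (LinearMap.id : (H ⊗[R] H →ₗ[R] H ⊗[R] H) →ₗ[R]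
          (H ⊗[R] H →ₗ[R] H ⊗[R] H)).compl₂ (comul : H →ₗ[R] H ⊗[R] H) := by
    ext G y; rfl
  rw [pe2, ← conv_compr, comul_S h hc, map_comul_eq_conv, Psi]
  rw [conv_interchange hc
    (LinearMap.id : (H ⊗[R] H →ₗ[R] H ⊗[R] H) →ₗ[R] (H ⊗[R] H →ₗ[R] H ⊗[R] H))
    (TensorProduct.mapBilinear (RingHom.id R) H H H H) (TensorProduct.mk R H H)
    (TensorProduct.mk R H H)
    (LinearMap.id : (H →ₗ[R] H) →ₗ[R] (H →ₗ[R] H))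
    (LinearMap.id : (H →ₗ[R] H) →ₗ[R] (H →ₗ[R] H))
    (fun F G x y => by simp [TensorProduct.mapBilinear_apply])
    P.inv P.inv h.S h.S]

lemma comul_Tant_apply (hc : Cocomm R H) (x : H) :
    comul (R := R) (Tant h P x)
      = TensorProduct.map (Tant h P) (Tant h P) (comul (R := R) x) := by
  have h1 := LinearMap.congr_fun (comul_Tant h P hc) x
  have h2 := LinearMap.congr_fun (map_comul_eq_conv (Tant h P) (Tant h P)) x
  rw [comp_apply] at h1 h2
  rw [h1, ← h2]

lemma tr_Tant (hc : Cocomm R H) : P.tr ∘ₗ Tant h P = P.inv := by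
  have a1 : conv (llcomp R H H H) P.tr (P.tr ∘ₗ Tant h P) = e LinearMap.id := by
    ext x w
    rw [conv_repr _ _ _ (ℛ R x), LinearMap.sum_apply]
    have congr1 : ∀ i ∈ (ℛ R x).index,
        ((llcomp R H H H) (P.tr ((ℛ R x).left i))
            ((P.tr ∘ₗ Tant h P) ((ℛ R x).right i))) w
          = P.tr (Qmul h P ((ℛ R x).left i) (Tant h P ((ℛ R x).right i))) w := by
      intro i _
      rw [tr_Qmul h P]
      rfl
    rw [Finset.sum_congr rfl congr1]
    have h4 : ∑ i ∈ (ℛ R x).index,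
        P.tr (Qmul h P ((ℛ R x).left i) (Tant h P ((ℛ R x).right i))) w
        = P.tr (∑ i ∈ (ℛ R x).index,
            Qmul h P ((ℛ R x).left i) (Tant h P ((ℛ R x).right i))) w := by
      rw [map_sum, LinearMap.sum_apply]
    rw [h4, Q_S_mul_right h P x (ℛ R x), map_smul, tr_id_one h P]
    simp
  exact conv_cancel_left (llcomp R H H H) (llcomp R H H H) LinearMap.id
    (fun F => id_comp F) (fun _ _ _ => rfl) (conv_inv_tr h P)
    (a1.trans (conv_tr_inv h P).symm)

lemma TRMULmap :
    (llcomp R (H ⊗[R] H) H H).flip (TensorProduct.lift h.mul) ∘ₗ P.tr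
      = llcomp R (H ⊗[R] H) (H ⊗[R] H) H (TensorProduct.lift h.mul) ∘ₗ Theta h P := by
  refine LinearMap.ext fun x => ?_
  apply TensorProduct.ext'
  intro y z
  simp only [comp_apply, flip_apply, llcomp_apply, TensorProduct.lift.tmul]
  rw [Theta, conv_repr _ _ _ (ℛ R x), LinearMap.sum_apply, map_sum]
  rw [tr_mul' h P x y z (ℛ R x)]
  exact (Finset.sum_congr rfl fun i _ => by
    rw [TensorProduct.mapBilinear_apply, TensorProduct.map_tmul,
      TensorProduct.lift.tmul]).symm

lemma inv_mul_map (hc : Cocomm R H) :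
    (llcomp R (H ⊗[R] H) H H).flip (TensorProduct.lift h.mul) ∘ₗ P.inv
      = llcomp R (H ⊗[R] H) (H ⊗[R] H) H (TensorProduct.lift h.mul) ∘ₗ Psi h P := by
  set mm := TensorProduct.lift h.mul with hmm
  set Lm := (llcomp R (H ⊗[R] H) H H).flip mm with hLm
  set Rm := llcomp (σ₁₂ := RingHom.id R) R (H ⊗[R] H) (H ⊗[R] H) H mm with hRm
  set ν1 := llcomp (σ₁₂ := RingHom.id R) (σ₂₃ := RingHom.id R) (σ₁₃ := RingHom.id R) R (H ⊗[R] H) (H ⊗[R] H) H with hν1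
  set ν2 := llcomp (σ₁₂ := RingHom.id R) (σ₂₃ := RingHom.id R) (σ₁₃ := RingHom.id R) R (H ⊗[R] H) H H with hν2
  have pe1 : ν1 ∘ₗ Lm = ν2.compl₂ Rm := by ext F G y; rfl
  have pe2 : ν2.compl₂ Lm = (llcomp R H H H).compr₂ Lm := by ext F G y; rfl
  have i1 : conv ν1 (Lm ∘ₗ P.inv) (Theta h P) = e mm := by
    rw [conv_compl, pe1, ← conv_compr, ← TRMULmap h P, conv_compr, pe2, ← conv_map,
      conv_inv_tr h P, comp_e]
    rfl
  have i2 : conv ν1 (Rm ∘ₗ Psi h P) (Theta h P) = e mm := by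
    have pe3 : ν1 ∘ₗ Rm = (llcomp R (H ⊗[R] H) (H ⊗[R] H) (H ⊗[R] H)).compr₂ Rm := by
      ext F G y; rfl
    rw [conv_compl, pe3, ← conv_map, ph3b h P hc, comp_e]
    rfl
  exact conv_cancel_right ν1 (llcomp R (H ⊗[R] H) (H ⊗[R] H) (H ⊗[R] H))
    LinearMap.id (fun F => comp_id F) (fun _ _ _ => rfl) (ph3a h P hc)
    (i1.trans i2.symm)

lemma inv_one_apply (x : H) : P.inv x h.one = counit (R := R) x • h.one := by
  have h1 := conv_repr (llcomp R H H H) P.inv P.tr (ℛ R x)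
  rw [conv_inv_tr h P] at h1
  have h2 : ∑ i ∈ (ℛ R x).index,
      ((llcomp R H H H) (P.inv ((ℛ R x).left i))) (P.tr ((ℛ R x).right i)) h.one
      = counit (R := R) x • h.one := by
    have := congrArg (fun F : H →ₗ[R] H => F h.one) h1.symm
    simpa [LinearMap.sum_apply] using this
  have h3 : ∀ i ∈ (ℛ R x).index,
      ((llcomp R H H H) (P.inv ((ℛ R x).left i))) (P.tr ((ℛ R x).right i)) h.one
        = counit (R := R) ((ℛ R x).right i) • P.inv ((ℛ R x).left i) h.one := by
    intro i _
    simp only [llcomp_apply, comp_apply]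
    rw [tr_one_apply h P, map_smul]
  rw [Finset.sum_congr rfl h3] at h2
  rw [← h2]
  exact (sum_counit_smul_right (P.inv.flip h.one) (ℛ R x)).symm

lemma conv_Qmul_T_id (hc : Cocomm R H) :
    conv (Qmul h P) (Tant h P) LinearMap.id = e h.one := by
  set mm := TensorProduct.lift h.mul with hmm
  set Rm := llcomp (σ₁₂ := RingHom.id R) R (H ⊗[R] H) (H ⊗[R] H) H mm with hRm
  set Lm := (llcomp R (H ⊗[R] H) H H).flip mm with hLm
  have c1 : conv (Qmul h P) (Tant h P) (LinearMap.id : H →ₗ[R] H)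
      = conv (LinearMap.id : (H →ₗ[R] H) →ₗ[R] (H →ₗ[R] H))
          (Qmul h P ∘ₗ Tant h P) LinearMap.id := by
    have p1 := conv_compl (LinearMap.id : (H →ₗ[R] H) →ₗ[R] (H →ₗ[R] H))
      (Qmul h P) (Tant h P) (LinearMap.id : H →ₗ[R] H)
    rw [id_comp] at p1
    exact p1.symm
  have c2 : Qmul h P ∘ₗ Tant h P
      = conv (llcomp R H H H) (h.mul ∘ₗ Tant h P) P.inv := by
    have hpre := conv_precomp (llcomp R H H H) h.mul P.tr (Tant h P)
      (comul_Tant_apply h P hc)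
    rw [tr_Tant h P hc] at hpre
    exact hpre
  have c4 : h.mul ∘ₗ Tant h P
      = conv ((LinearMap.id : (H →ₗ[R] H) →ₗ[R] (H →ₗ[R] H)).compr₂ h.mul)
          P.inv h.S := by
    have := conv_map (LinearMap.id : (H →ₗ[R] H) →ₗ[R] (H →ₗ[R] H)) P.inv h.S h.mul
    exact this
  rw [c1, c2]
  rw [conv_assoc (llcomp R H H H)
    (LinearMap.id : (H →ₗ[R] H) →ₗ[R] (H →ₗ[R] H))
    (LinearMap.id : (H →ₗ[R] H) →ₗ[R] (H →ₗ[R] H))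
    (LinearMap.id : (H →ₗ[R] H) →ₗ[R] (H →ₗ[R] H))
    (fun _ _ _ => rfl) (h.mul ∘ₗ Tant h P) P.inv LinearMap.id]
  rw [c4]
  rw [conv_interchange hc
    (LinearMap.id : (H →ₗ[R] H) →ₗ[R] (H →ₗ[R] H))
    ((LinearMap.id : (H →ₗ[R] H) →ₗ[R] (H →ₗ[R] H)).compr₂ h.mul)
    (LinearMap.id : (H →ₗ[R] H) →ₗ[R] (H →ₗ[R] H))
    (LinearMap.id : (H ⊗[R] H →ₗ[R] H) →ₗ[R] (H ⊗[R] H →ₗ[R] H))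
    ((TensorProduct.mapBilinear (RingHom.id R) H H H H).compr₂ Rm)
    (TensorProduct.mk R H H)
    (fun F b F' b' => by
      simp [TensorProduct.mapBilinear_apply, hRm, hmm])
    P.inv h.S P.inv LinearMap.id]
  have c6 : conv ((TensorProduct.mapBilinear (RingHom.id R) H H H H).compr₂ Rm) P.inv P.inv
      = Lm ∘ₗ P.inv := by
    rw [← conv_map, ← Psi]
    exact (inv_mul_map h P hc).symm
  rw [c6]
  rw [conv_compl]
  have pe3 : (LinearMap.id : (H ⊗[R] H →ₗ[R] H) →ₗ[R] (H ⊗[R] H →ₗ[R] H)) ∘ₗ Lm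
      = (LinearMap.id : (H →ₗ[R] H) →ₗ[R] (H →ₗ[R] H)).compl₂ mm := by
    ext F w; rfl
  rw [pe3, ← conv_compr]
  have c7 : mm ∘ₗ conv (TensorProduct.mk R H H) h.S (LinearMap.id : H →ₗ[R] H)
      = e h.one := by
    rw [conv_map]
    have pe4 : (TensorProduct.mk R H H).compr₂ mm = h.mul := by
      ext a b; rfl
    rw [pe4]
    exact conv_S_left h
  rw [c7, conv_e_right]
  ext x
  simp only [comp_apply, flip_apply, id_coe, id_eq, e_apply]
  exact inv_one_apply h P x

lemma Q_S_mul_left (hc : Cocomm R H) (a : H) {ι : Type*} (r : Coalgebra.Repr R a ι) :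
    ∑ i ∈ r.index, Qmul h P (Tant h P (r.left i)) (r.right i)
      = counit (R := R) a • h.one := by
  have h1 := conv_repr (Qmul h P) (Tant h P) LinearMap.id r
  rw [conv_Qmul_T_id h P hc] at h1
  simpa using h1.symm

end PHmain

variable (R H : Type*) [CommRing R] [AddCommGroup H] [Module R H] [Coalgebra R H]

/-- The subadjacent Hopf algebra of a cocommutative post-Hopf algebra:
`x*y := x₍₁₎·(x₍₂₎▷y)` with antipode `T(x) := ψ_{x₍₁₎}(S(x₍₂₎))`. -/
theorem postHopf_subadjacent (h : HopfMul R H) (hc : Cocomm R H) (P : PostHopf R H h) :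
    ∃ Q : HopfMul R H, Q.one = h.one ∧
      (∀ (x y : H) {ι : Type*} (r : Coalgebra.Repr R x ι),
        Q.mul x y = ∑ i ∈ r.index, h.mul (r.left i) (P.tr (r.right i) y)) ∧
      (∀ (x : H) {ι : Type*} (r : Coalgebra.Repr R x ι),
        Q.S x = ∑ i ∈ r.index, P.inv (r.left i) (h.S (r.right i))) := by
  refine ⟨{ mul := PHmain.Qmul h P
            one := h.one
            S := PHmain.Tant h P
            mul_assoc := PHmain.Q_assoc h P hc
            one_mul := PHmain.Q_one_mul h P
            mul_one := PHmain.Q_mul_one h P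
            comul_mul := @fun a b _ _ ra rb => PHmain.Q_comul_mul h P hc a b ra rb
            comul_one := h.comul_one
            counit_mul := PHmain.Q_counit_mul h P
            counit_one := h.counit_one
            S_mul_left := @fun a _ r => PHmain.Q_S_mul_left h P hc a r
            S_mul_right := @fun a _ r => PHmain.Q_S_mul_right h P a r },
    rfl, @fun x y _ r => PHmain.Qmul_repr h P x y r, @fun x _ r => PHmain.Tant_repr h P x r⟩
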